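/- Assume a delayed-reward MDP P̃ with episodic reward and an SDP P obtained by a higher-order Markov reward redistribution that is strictly return-equivalent to P̃, with expected redistributed rewards h_t = E_π[R_{t+1} | s_0,a_0,…,s_t,a_t] depending on the prefix. If the redistribution is optimal (κ(T−t−1,t) = 0 for all 0 ≤ t ≤ T−1) and the condition E_π[Σ_{τ=0}^{T−t−1} R_{t+2+τ} | s_t,a_t] = E_π[Σ_{τ=0}^{T−t−1} R_{t+2+τ} | s_0,a_0,…,s_t,a_t] holds for every prefix, then for every 0 ≤ t ≤ T the Q-function of P̃ decomposes as q̃^π(s_t,a_t) = Σ_{τ=0}^{t} h_τ. -/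

import Mathlib

namespace RR

/-- A trajectory (episode) of horizon `T`: state-action pairs at times `0, …, T`. -/
abbrev Traj (S A : Type) (T : ℕ) := Fin (T + 1) → S × A

variable {S A : Type} [Fintype S] [Fintype A] [DecidableEq S] [DecidableEq A] {T : ℕ}

/-- State-action pair of a trajectory at (clamped) natural time `t`. -/
def tAt (τ : Traj S A T) (t : ℕ) : S × A :=
  τ ⟨min t T, Nat.lt_succ_of_le (min_le_right t T)⟩

/-- Probability of a trajectory under initial distribution `μ0`, Markov transition
kernel `p` and Markov policy `π`. -/
noncomputable def trajProb (μ0 : S → ℝ) (p : S → A → S → ℝ) (π : S → A → ℝ)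
    (τ : Traj S A T) : ℝ :=
  μ0 (τ 0).1 * π (τ 0).1 (τ 0).2 *
    ∏ t : Fin T, (p (τ t.castSucc).1 (τ t.castSucc).2 (τ t.succ).1 *
      π (τ t.succ).1 (τ t.succ).2)

/-- Expectation of `f` over trajectories. -/
noncomputable def expec (μ0 : S → ℝ) (p : S → A → S → ℝ) (π : S → A → ℝ)
    (f : Traj S A T → ℝ) : ℝ :=
  ∑ τ : Traj S A T, trajProb μ0 p π τ * f τ

open scoped Classical in
/-- Probability of the event `E` over trajectories. -/
noncomputable def probOf (μ0 : S → ℝ) (p : S → A → S → ℝ) (π : S → A → ℝ)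
    (E : Traj S A T → Prop) : ℝ :=
  ∑ τ ∈ Finset.univ.filter E, trajProb μ0 p π τ

open scoped Classical in
/-- Conditional expectation of `f` given the event `E` (junk value `0` if `E` is null). -/
noncomputable def condExp (μ0 : S → ℝ) (p : S → A → S → ℝ) (π : S → A → ℝ)
    (f : Traj S A T → ℝ) (E : Traj S A T → Prop) : ℝ :=
  (∑ τ ∈ Finset.univ.filter E, trajProb μ0 p π τ * f τ) / probOf μ0 p π E

/-- `π` is a Markov policy (probability of action `a` given state `s`). -/
def IsPolicy (π : S → A → ℝ) : Prop :=
  (∀ s a, 0 ≤ π s a) ∧ ∀ s, ∑ a : A, π s a = 1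

/-- `p` is a Markov transition kernel. -/
def IsKernel (p : S → A → S → ℝ) : Prop :=
  (∀ s a s', 0 ≤ p s a s') ∧ ∀ s a, ∑ s' : S, p s a s' = 1

/-- `μ0` is an initial state distribution. -/
def IsInit (μ0 : S → ℝ) : Prop :=
  (∀ s, 0 ≤ μ0 s) ∧ ∑ s : S, μ0 s = 1

/-- The return `G_0` of an episode: `R τ t` is the reward `R_{t+1}` received at time `t`. -/
noncomputable def ret (R : Traj S A T → ℕ → ℝ) (τ : Traj S A T) : ℝ :=
  ∑ t ∈ Finset.range (T + 1), R τ t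

/-- A reward function is causal (an SDP reward): the reward at time `t` depends only on
the history `(s_0,a_0,…,s_t,a_t)`. -/
def Causal (R : Traj S A T → ℕ → ℝ) : Prop :=
  ∀ t ≤ T, ∀ τ τ' : Traj S A T, (∀ u ≤ t, tAt τ u = tAt τ' u) → R τ t = R τ' t

/-- The delayed (episodic) reward: the whole return `Rfin (s_T, a_T)` is given at the
final time step `T`, all other rewards are `0`. -/
noncomputable def delayedR (Rfin : S → A → ℝ) (τ : Traj S A T) (t : ℕ) : ℝ :=
  if t = T then Rfin (tAt τ T).1 (tAt τ T).2 else 0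

/-- The Q-function `q̃^π(s_t, a_t) = E_π[R̃_{T+1} ∣ s_t, a_t]` of the delayed-reward MDP. -/
noncomputable def qtil (T : ℕ) (μ0 : S → ℝ) (p : S → A → S → ℝ) (π : S → A → ℝ)
    (Rfin : S → A → ℝ) (t : ℕ) (s : S) (a : A) : ℝ :=
  condExp μ0 p π (fun τ : Traj S A T => Rfin (tAt τ T).1 (tAt τ T).2)
    (fun τ => tAt τ t = (s, a))

/-- Expected future rewards `κ(m, tm1) = E_π[∑_{j=0}^{m} R_{tm1+1+j+1} ∣ s_{tm1}, a_{tm1}]`,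
i.e. `κ(m, t−1)` of the paper is `kappa μ0 p π R m (t−1)`. -/
noncomputable def kappa (μ0 : S → ℝ) (p : S → A → S → ℝ) (π : S → A → ℝ)
    (R : Traj S A T → ℕ → ℝ) (m tm1 : ℕ) (s : S) (a : A) : ℝ :=
  condExp μ0 p π (fun τ => ∑ j ∈ Finset.range (m + 1), R τ (tm1 + 1 + j))
    (fun τ => tAt τ tm1 = (s, a))

/-- The Q-function of the SDP: `q^π(s_t,a_t) = E_π[∑_{k=0}^{T−t} R_{t+k+1} ∣ s_t, a_t]`. -/
noncomputable def qval (μ0 : S → ℝ) (p : S → A → S → ℝ) (π : S → A → ℝ)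
    (R : Traj S A T → ℕ → ℝ) (t : ℕ) (s : S) (a : A) : ℝ :=
  condExp μ0 p π (fun τ => ∑ j ∈ Finset.range (T - t + 1), R τ (t + j))
    (fun τ => tAt τ t = (s, a))

/-- Expected immediate reward `r(s_t, a_t) = E_π[R_{t+1} ∣ s_t, a_t]`. -/
noncomputable def rexp (μ0 : S → ℝ) (p : S → A → S → ℝ) (π : S → A → ℝ)
    (R : Traj S A T → ℕ → ℝ) (t : ℕ) (s : S) (a : A) : ℝ :=
  condExp μ0 p π (fun τ => R τ t) (fun τ => tAt τ t = (s, a))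

/-- The event that the trajectory starts with the state-action prefix `σ 0, …, σ t`. -/
def prefixEv (σ : ℕ → S × A) (t : ℕ) (τ : Traj S A T) : Prop :=
  ∀ u ≤ t, tAt τ u = σ u


/-! ### Auxiliary machinery for the proof -/

set_option linter.unusedSectionVars false

section Aux

open Finset
open scoped Classical

/-- Backward value recursion: `phi p π g k x` is the expected value of `g` of the
state-action pair `k` steps in the future, starting from `x`. -/
noncomputable def phi (p : S → A → S → ℝ) (π : S → A → ℝ) (g : S × A → ℝ) :
    ℕ → S × A → ℝ
  | 0 => g
  | k + 1 => fun x => ∑ y : S × A, p x.1 x.2 y.1 * π y.1 y.2 * phi p π g k y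

/-- Probability of a state-action prefix `σ 0, …, σ t`. -/
noncomputable def preP (μ0 : S → ℝ) (p : S → A → S → ℝ) (π : S → A → ℝ)
    (σ : ℕ → S × A) (t : ℕ) : ℝ :=
  μ0 (σ 0).1 * π (σ 0).1 (σ 0).2 *
    ∏ u ∈ Finset.range t,
      (p (σ u).1 (σ u).2 (σ (u + 1)).1 * π (σ (u + 1)).1 (σ (u + 1)).2)

lemma tAt_of_le (τ : Traj S A T) {u : ℕ} (h : u ≤ T) :
    tAt τ u = τ ⟨u, Nat.lt_succ_of_le h⟩ := by
  simp [tAt, Nat.min_eq_left h]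

lemma trajProb_nonneg {μ0 : S → ℝ} {p : S → A → S → ℝ} {π : S → A → ℝ}
    (hμ0 : IsInit μ0) (hp : IsKernel p) (hπ : IsPolicy π) (τ : Traj S A T) :
    0 ≤ trajProb μ0 p π τ := by
  refine mul_nonneg (mul_nonneg (hμ0.1 _) (hπ.1 _ _)) (Finset.prod_nonneg fun i _ => ?_)
  exact mul_nonneg (hp.1 _ _ _) (hπ.1 _ _)

lemma probOf_nonneg {μ0 : S → ℝ} {p : S → A → S → ℝ} {π : S → A → ℝ}
    (hμ0 : IsInit μ0) (hp : IsKernel p) (hπ : IsPolicy π) (E : Traj S A T → Prop) :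
    0 ≤ probOf μ0 p π E :=
  Finset.sum_nonneg fun τ _ => trajProb_nonneg hμ0 hp hπ τ

lemma probOf_mono {μ0 : S → ℝ} {p : S → A → S → ℝ} {π : S → A → ℝ}
    (hμ0 : IsInit μ0) (hp : IsKernel p) (hπ : IsPolicy π)
    {E E' : Traj S A T → Prop} (h : ∀ τ, E τ → E' τ) :
    probOf μ0 p π E ≤ probOf μ0 p π E' := by
  refine Finset.sum_le_sum_of_subset_of_nonneg ?_ fun τ _ _ => trajProb_nonneg hμ0 hp hπ τ
  intro τ hτ
  simp only [Finset.mem_filter, Finset.mem_univ, true_and] at hτ ⊢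
  exact h τ hτ

lemma condExp_congr_on (μ0 : S → ℝ) (p : S → A → S → ℝ) (π : S → A → ℝ)
    {f f' : Traj S A T → ℝ} {E : Traj S A T → Prop}
    (h : ∀ τ, E τ → f τ = f' τ) :
    condExp μ0 p π f E = condExp μ0 p π f' E := by
  unfold condExp
  congr 1
  refine Finset.sum_congr rfl fun τ hτ => ?_
  simp only [Finset.mem_filter, Finset.mem_univ, true_and] at hτ
  rw [h τ hτ]

lemma condExp_add (μ0 : S → ℝ) (p : S → A → S → ℝ) (π : S → A → ℝ)
    (f f' : Traj S A T → ℝ) (E : Traj S A T → Prop) :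
    condExp μ0 p π (fun τ => f τ + f' τ) E = condExp μ0 p π f E + condExp μ0 p π f' E := by
  unfold condExp
  rw [← add_div]
  congr 1
  rw [← Finset.sum_add_distrib]
  exact Finset.sum_congr rfl fun τ _ => by ring

lemma condExp_finsum {ι : Type*} (μ0 : S → ℝ) (p : S → A → S → ℝ) (π : S → A → ℝ)
    (s : Finset ι) (f : ι → Traj S A T → ℝ) (E : Traj S A T → Prop) :
    condExp μ0 p π (fun τ => ∑ i ∈ s, f i τ) E = ∑ i ∈ s, condExp μ0 p π (f i) E := by
  unfold condExp
  rw [← Finset.sum_div]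
  congr 1
  simp only [Finset.mul_sum]
  exact Finset.sum_comm

lemma condExp_const_on {μ0 : S → ℝ} {p : S → A → S → ℝ} {π : S → A → ℝ}
    {f : Traj S A T → ℝ} {E : Traj S A T → Prop} {c : ℝ}
    (h : ∀ τ, E τ → f τ = c) (hE : probOf μ0 p π E ≠ 0) :
    condExp μ0 p π f E = c := by
  unfold condExp
  have : (∑ τ ∈ Finset.univ.filter E, trajProb μ0 p π τ * f τ)
      = probOf μ0 p π E * c := by
    unfold probOf
    rw [Finset.sum_mul]
    refine Finset.sum_congr rfl fun τ hτ => ?_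
    simp only [Finset.mem_filter, Finset.mem_univ, true_and] at hτ
    rw [h τ hτ]
  rw [this, mul_comm, mul_div_assoc, div_self hE, mul_one]

/-- Key factorization lemma: summing `trajProb · g(final)` over a prefix event. -/
lemma sum_prefix_eq (μ0 : S → ℝ) (p : S → A → S → ℝ) (π : S → A → ℝ) (g : S × A → ℝ) :
    ∀ (k t : ℕ), t + k = T → ∀ σ : ℕ → S × A,
      ∑ τ ∈ Finset.univ.filter (prefixEv (T := T) σ t),
          trajProb μ0 p π τ * g (tAt τ T)
        = preP μ0 p π σ t * phi p π g k (σ t) := by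
  intro k
  induction k with
  | zero =>
    intro t ht σ
    obtain rfl : t = T := by omega
    have hset : Finset.univ.filter (prefixEv (T := t) σ t)
        = {fun i : Fin (t + 1) => σ (i : ℕ)} := by
      ext τ
      simp only [Finset.mem_filter, Finset.mem_univ, true_and, Finset.mem_singleton]
      constructor
      · intro h
        funext i
        have hi : (i : ℕ) ≤ t := Nat.lt_succ_iff.mp i.isLt
        have := h i hi
        rwa [tAt_of_le τ hi, Fin.eta] at this
      · intro h u hu
        subst h
        rw [tAt_of_le _ hu]
    rw [hset, Finset.sum_singleton]
    have h1 : tAt (fun i : Fin (t + 1) => σ (i : ℕ)) t = σ t := by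
      rw [tAt_of_le _ le_rfl]
    have h2 : trajProb μ0 p π (fun i : Fin (t + 1) => σ (i : ℕ)) = preP μ0 p π σ t := by
      unfold trajProb preP
      have hterm : ∀ j : Fin t,
          (p (σ ((j.castSucc : Fin (t+1)) : ℕ)).1 (σ ((j.castSucc : Fin (t+1)) : ℕ)).2
              (σ ((j.succ : Fin (t+1)) : ℕ)).1 *
            π (σ ((j.succ : Fin (t+1)) : ℕ)).1 (σ ((j.succ : Fin (t+1)) : ℕ)).2)
          = (p (σ (j : ℕ)).1 (σ (j : ℕ)).2 (σ ((j : ℕ) + 1)).1 *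
              π (σ ((j : ℕ) + 1)).1 (σ ((j : ℕ) + 1)).2) := by
        intro j
        simp [Fin.coe_castSucc, Fin.val_succ]
      rw [Finset.prod_congr rfl fun j _ => hterm j]
      rw [Fin.prod_univ_eq_prod_range
        (fun u => p (σ u).1 (σ u).2 (σ (u + 1)).1 * π (σ (u + 1)).1 (σ (u + 1)).2) t]
      simp
    rw [h1, h2]
    rfl
  | succ k ih =>
    intro t ht σ
    have htT : t + 1 ≤ T := by omega
    have key : ∀ x : S × A,
        (Finset.univ.filter (prefixEv (T := T) σ t)).filter (fun τ => tAt τ (t + 1) = x)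
          = Finset.univ.filter
              (prefixEv (T := T) (fun u => if u = t + 1 then x else σ u) (t + 1)) := by
      intro x
      ext τ
      simp only [Finset.mem_filter, Finset.mem_univ, true_and]
      constructor
      · rintro ⟨h1, h2⟩ u hu
        rcases Nat.lt_or_ge u (t + 1) with hu' | hu'
        · have hut : u ≤ t := by omega
          have hne : u ≠ t + 1 := by omega
          simp only [hne, if_false]
          exact h1 u hut
        · have : u = t + 1 := le_antisymm hu hu'
          subst this
          simpa using h2
      · intro h
        constructor
        · intro u hu
          have := h u (by omega)
          simpa [show u ≠ t + 1 by omega] using this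
        · simpa using h (t + 1) le_rfl
    calc
      ∑ τ ∈ Finset.univ.filter (prefixEv (T := T) σ t),
          trajProb μ0 p π τ * g (tAt τ T)
        = ∑ x : S × A, ∑ τ ∈ (Finset.univ.filter (prefixEv (T := T) σ t)).filter
            (fun τ => tAt τ (t + 1) = x), trajProb μ0 p π τ * g (tAt τ T) := by
          rw [Finset.sum_fiberwise]
      _ = ∑ x : S × A, preP μ0 p π (fun u => if u = t + 1 then x else σ u) (t + 1) *
            phi p π g k ((fun u => if u = t + 1 then x else σ u) (t + 1)) := by
          refine Finset.sum_congr rfl fun x _ => ?_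
          rw [key x]
          exact ih (t + 1) (by omega) _
      _ = ∑ x : S × A, preP μ0 p π σ t *
            (p (σ t).1 (σ t).2 x.1 * π x.1 x.2 * phi p π g k x) := by
          refine Finset.sum_congr rfl fun x _ => ?_
          have hx : (fun u => if u = t + 1 then x else σ u) (t + 1) = x := by simp
          rw [hx]
          have hpre : preP μ0 p π (fun u => if u = t + 1 then x else σ u) (t + 1)
              = preP μ0 p π σ t * (p (σ t).1 (σ t).2 x.1 * π x.1 x.2) := by
            unfold preP
            rw [Finset.prod_range_succ]
            have hcongr : ∀ u ∈ Finset.range t,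
                (p ((fun u => if u = t + 1 then x else σ u) u).1
                    ((fun u => if u = t + 1 then x else σ u) u).2
                    ((fun u => if u = t + 1 then x else σ u) (u + 1)).1 *
                  π ((fun u => if u = t + 1 then x else σ u) (u + 1)).1
                    ((fun u => if u = t + 1 then x else σ u) (u + 1)).2)
                = (p (σ u).1 (σ u).2 (σ (u + 1)).1 *
                    π (σ (u + 1)).1 (σ (u + 1)).2) := by
              intro u hu
              simp only [Finset.mem_range] at hu
              have h1 : u ≠ t + 1 := by omega
              have h2 : u + 1 ≠ t + 1 := by omega
              simp [h1, h2, show u ≠ t by omega]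
            rw [Finset.prod_congr rfl hcongr]
            have h0 : ((fun u => if u = t + 1 then x else σ u) 0) = σ 0 :=
              if_neg (by omega)
            have h3 : ((fun u => if u = t + 1 then x else σ u) t) = σ t :=
              if_neg (by omega)
            have h4 : ((fun u => if u = t + 1 then x else σ u) (t + 1)) = x :=
              if_pos rfl
            simp only [h0, h3, h4, if_true]
            ring
          rw [hpre]
          ring
      _ = preP μ0 p π σ t * phi p π g (k + 1) (σ t) := by
          rw [show phi p π g (k + 1) (σ t)
              = ∑ y : S × A, p (σ t).1 (σ t).2 y.1 * π y.1 y.2 * phi p π g k y from rfl]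
          rw [Finset.mul_sum]

lemma phi_one {p : S → A → S → ℝ} {π : S → A → ℝ}
    (hp : IsKernel p) (hπ : IsPolicy π) :
    ∀ (k : ℕ) (x : S × A), phi p π (fun _ => (1 : ℝ)) k x = 1
  | 0, x => rfl
  | k + 1, x => by
    show (∑ y : S × A, p x.1 x.2 y.1 * π y.1 y.2 * phi p π (fun _ => (1:ℝ)) k y) = 1
    have : ∀ y : S × A, p x.1 x.2 y.1 * π y.1 y.2 * phi p π (fun _ => (1:ℝ)) k y
        = p x.1 x.2 y.1 * π y.1 y.2 := fun y => by rw [phi_one hp hπ k y, mul_one]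
    rw [Finset.sum_congr rfl fun y _ => this y, Fintype.sum_prod_type]
    have : ∀ s' : S, ∑ a' : A, p x.1 x.2 s' * π s' a' = p x.1 x.2 s' := by
      intro s'
      rw [← Finset.mul_sum, hπ.2 s', mul_one]
    rw [Finset.sum_congr rfl fun s' _ => this s', hp.2 x.1 x.2]

lemma probOf_prefix {μ0 : S → ℝ} {p : S → A → S → ℝ} {π : S → A → ℝ}
    (hp : IsKernel p) (hπ : IsPolicy π) {t : ℕ} (ht : t ≤ T) (σ : ℕ → S × A) :
    probOf μ0 p π (prefixEv (T := T) σ t) = preP μ0 p π σ t := by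
  have := sum_prefix_eq (T := T) μ0 p π (fun _ => (1 : ℝ)) (T - t) t (by omega) σ
  rw [phi_one hp hπ] at this
  rw [mul_one] at this
  unfold probOf
  rw [← this]
  exact Finset.sum_congr rfl fun τ _ => (mul_one _).symm

lemma condExp_prefix {μ0 : S → ℝ} {p : S → A → S → ℝ} {π : S → A → ℝ}
    (hp : IsKernel p) (hπ : IsPolicy π) (g : S × A → ℝ) {t : ℕ} (ht : t ≤ T)
    (σ : ℕ → S × A) (hσ : probOf μ0 p π (prefixEv (T := T) σ t) ≠ 0) :
    condExp μ0 p π (fun τ => g (tAt τ T)) (prefixEv (T := T) σ t)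
      = phi p π g (T - t) (σ t) := by
  unfold condExp
  rw [sum_prefix_eq (T := T) μ0 p π g (T - t) t (by omega) σ,
    probOf_prefix hp hπ ht σ]
  have hpre : preP μ0 p π σ t ≠ 0 := by
    rwa [probOf_prefix hp hπ ht σ] at hσ
  rw [mul_comm, mul_div_assoc, div_self hpre, mul_one]

/-- The extension of a finite prefix to `ℕ → S × A` (clamped at `t`). -/
def extPre {t : ℕ} (ρ : Fin (t + 1) → S × A) : ℕ → S × A :=
  fun u => ρ ⟨min u t, Nat.lt_succ_of_le (min_le_right u t)⟩

/-- Factorization over the event that fixes the state-action pair at time `t`. -/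
lemma sum_state_eq (μ0 : S → ℝ) (p : S → A → S → ℝ) (π : S → A → ℝ) (g : S × A → ℝ)
    {t : ℕ} (ht : t ≤ T) (x : S × A) :
    ∑ τ ∈ Finset.univ.filter (fun τ : Traj S A T => tAt τ t = x),
        trajProb μ0 p π τ * g (tAt τ T)
      = (∑ ρ ∈ Finset.univ.filter (fun ρ : Fin (t + 1) → S × A => ρ ⟨t, Nat.lt_succ_self t⟩ = x),
          preP μ0 p π (extPre ρ) t) * phi p π g (T - t) x := by
  have hfib := Finset.sum_fiberwise (Finset.univ.filter (fun τ : Traj S A T => tAt τ t = x))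
    (fun τ => (fun i : Fin (t + 1) => tAt τ (i : ℕ)))
    (fun τ => trajProb μ0 p π τ * g (tAt τ T))
  rw [← hfib]
  rw [Finset.sum_mul]
  rw [← Finset.sum_filter_add_sum_filter_not Finset.univ
    (fun ρ : Fin (t + 1) → S × A => ρ ⟨t, Nat.lt_succ_self t⟩ = x)]
  have hz : ∑ ρ ∈ Finset.univ.filter
      (fun ρ : Fin (t + 1) → S × A => ¬ ρ ⟨t, Nat.lt_succ_self t⟩ = x),
      ∑ τ ∈ (Finset.univ.filter (fun τ : Traj S A T => tAt τ t = x)).filter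
        (fun τ => (fun i : Fin (t + 1) => tAt τ (i : ℕ)) = ρ),
        trajProb μ0 p π τ * g (tAt τ T) = 0 := by
    refine Finset.sum_eq_zero fun ρ hρ => ?_
    simp only [Finset.mem_filter, Finset.mem_univ, true_and] at hρ
    refine Finset.sum_eq_zero fun τ hτ => ?_
    exfalso
    simp only [Finset.mem_filter, Finset.mem_univ, true_and] at hτ
    apply hρ
    rw [← hτ.2]
    exact hτ.1
  rw [hz, add_zero]
  refine Finset.sum_congr rfl fun ρ hρ => ?_
  simp only [Finset.mem_filter, Finset.mem_univ, true_and] at hρ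
  have hev : (Finset.univ.filter (fun τ : Traj S A T => tAt τ t = x)).filter
      (fun τ => (fun i : Fin (t + 1) => tAt τ (i : ℕ)) = ρ)
      = Finset.univ.filter (prefixEv (T := T) (extPre ρ) t) := by
    ext τ
    simp only [Finset.mem_filter, Finset.mem_univ, true_and]
    constructor
    · rintro ⟨h1, h2⟩ u hu
      have : tAt τ u = ρ ⟨u, Nat.lt_succ_of_le hu⟩ := by
        rw [← h2]
      rw [this]
      unfold extPre
      congr 1
      exact (Fin.mk_eq_mk).mpr (Nat.min_eq_left hu).symm
    · intro h
      constructor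
      · have := h t le_rfl
        rw [this]
        unfold extPre
        rw [← hρ]
        congr 1
        exact (Fin.mk_eq_mk).mpr (Nat.min_eq_left le_rfl)
      · funext i
        have hi : (i : ℕ) ≤ t := Nat.lt_succ_iff.mp i.isLt
        have := h (i : ℕ) hi
        rw [this]
        unfold extPre
        congr 1
        exact (Fin.mk_eq_mk).mpr (Nat.min_eq_left hi)
  rw [hev, sum_prefix_eq (T := T) μ0 p π g (T - t) t (by omega) (extPre ρ)]
  congr 2
  unfold extPre
  rw [← hρ]
  congr 1
  exact (Fin.mk_eq_mk).mpr (Nat.min_eq_left le_rfl)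

lemma probOf_state {μ0 : S → ℝ} {p : S → A → S → ℝ} {π : S → A → ℝ}
    (hp : IsKernel p) (hπ : IsPolicy π) {t : ℕ} (ht : t ≤ T) (x : S × A) :
    probOf μ0 p π (fun τ : Traj S A T => tAt τ t = x)
      = ∑ ρ ∈ Finset.univ.filter
          (fun ρ : Fin (t + 1) → S × A => ρ ⟨t, Nat.lt_succ_self t⟩ = x),
          preP μ0 p π (extPre ρ) t := by
  have h := sum_state_eq (T := T) μ0 p π (fun _ => (1 : ℝ)) ht x
  rw [phi_one hp hπ, mul_one] at h
  unfold probOf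
  rw [Finset.filter_congr_decidable, ← h]
  exact Finset.sum_congr rfl fun τ _ => (mul_one _).symm

/-- The Markov property: conditioning the final state-action pair on a prefix is the
same as conditioning on the last state-action of the prefix. -/
lemma condExp_state {μ0 : S → ℝ} {p : S → A → S → ℝ} {π : S → A → ℝ}
    (hp : IsKernel p) (hπ : IsPolicy π) (g : S × A → ℝ) {t : ℕ} (ht : t ≤ T)
    (x : S × A) (hx : probOf μ0 p π (fun τ : Traj S A T => tAt τ t = x) ≠ 0) :
    condExp μ0 p π (fun τ => g (tAt τ T)) (fun τ : Traj S A T => tAt τ t = x)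
      = phi p π g (T - t) x := by
  unfold condExp
  rw [Finset.filter_congr_decidable, sum_state_eq (T := T) μ0 p π g ht x,
    ← probOf_state hp hπ ht x, mul_comm, mul_div_assoc, div_self hx, mul_one]

end Aux

/-- For a strictly return-equivalent optimal higher-order Markov reward
redistribution satisfying the independence-of-the-past condition, the Q-function of the
delayed-reward MDP decomposes as the sum of the expected redistributed rewards:
`q̃^π(s_t,a_t) = ∑_{τ=0}^{t} h_τ`. -/
theorem stmt12_q_decomposition
    (S A : Type) [Fintype S] [Fintype A] [DecidableEq S] [DecidableEq A]
    (T : ℕ) (μ0 : S → ℝ) (p : S → A → S → ℝ)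
    (hμ0 : IsInit μ0) (hp : IsKernel p)
    (Rfin : S → A → ℝ) (R : Traj S A T → ℕ → ℝ)
    (hcausal : Causal R)
    (hsre : ∀ τ : Traj S A T, ret (delayedR (T := T) Rfin) τ = ret R τ)
    (π : S → A → ℝ) (hπ : IsPolicy π)
    (hopt : ∀ t : ℕ, t ≤ T - 1 → ∀ (s : S) (a : A),
      kappa μ0 p π R (T - t - 1) t s a = 0)
    (hcond : ∀ t : ℕ, t ≤ T → ∀ σ : ℕ → S × A,
      probOf μ0 p π (prefixEv (T := T) σ t) ≠ 0 →
      condExp μ0 p π (fun τ => ∑ j ∈ Finset.range (T - t), R τ (t + 1 + j))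
          (fun τ : Traj S A T => tAt τ t = σ t) =
        condExp μ0 p π (fun τ => ∑ j ∈ Finset.range (T - t), R τ (t + 1 + j))
          (prefixEv (T := T) σ t)) :
    ∀ t : ℕ, t ≤ T → ∀ σ : ℕ → S × A,
      probOf μ0 p π (prefixEv (T := T) σ t) ≠ 0 →
      qtil T μ0 p π Rfin t (σ t).1 (σ t).2 =
        ∑ u ∈ Finset.range (t + 1),
          condExp μ0 p π (fun τ => R τ u) (prefixEv (T := T) σ u) := by
  classical
  intro t ht σ hσ
  set gR : S × A → ℝ := fun x => Rfin x.1 x.2 with hgR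
  -- positivity facts
  have hpos : 0 < probOf μ0 p π (prefixEv (T := T) σ t) :=
    lt_of_le_of_ne (probOf_nonneg hμ0 hp hπ _) (Ne.symm hσ)
  have hx : probOf μ0 p π (fun τ : Traj S A T => tAt τ t = σ t) ≠ 0 := by
    refine ne_of_gt (lt_of_lt_of_le hpos ?_)
    exact probOf_mono hμ0 hp hπ (fun τ h => h t le_rfl)
  -- a witness trajectory with the given prefix
  have hne : ∃ τ0 : Traj S A T, prefixEv (T := T) σ t τ0 := by
    by_contra h
    push_neg at h
    apply hσ
    unfold probOf
    refine Finset.sum_eq_zero fun τ hτ => ?_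
    simp only [Finset.mem_filter, Finset.mem_univ, true_and] at hτ
    exact absurd hτ (h τ)
  obtain ⟨τ0, hτ0⟩ := hne
  -- the delayed reward equals the full sum of redistributed rewards
  have hR : ∀ τ : Traj S A T, Rfin (tAt τ T).1 (tAt τ T).2
      = ∑ u ∈ Finset.range (T + 1), R τ u := by
    intro τ
    have h := hsre τ
    unfold ret delayedR at h
    rw [Finset.sum_ite_eq'] at h
    simpa using h
  -- split the full sum at time t
  have hsplit : ∀ τ : Traj S A T, (∑ u ∈ Finset.range (T + 1), R τ u)
      = (∑ u ∈ Finset.range (t + 1), R τ u)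
        + ∑ j ∈ Finset.range (T - t), R τ (t + 1 + j) := by
    intro τ
    rw [show T + 1 = (t + 1) + (T - t) by omega, Finset.sum_range_add]
  -- the expected future sum conditioned on the state at time t vanishes
  have hfut0 : condExp μ0 p π (fun τ => ∑ j ∈ Finset.range (T - t), R τ (t + 1 + j))
      (fun τ : Traj S A T => tAt τ t = σ t) = 0 := by
    rcases eq_or_lt_of_le ht with hEq | hLt
    · have h0 : T - t = 0 := by omega
      have hz : ∀ τ : Traj S A T, (fun τ : Traj S A T => tAt τ t = σ t) τ →
          (∑ j ∈ Finset.range (T - t), R τ (t + 1 + j)) = 0 := by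
        intro τ _
        rw [h0]
        simp
      exact condExp_const_on hz hx
    · have hk := hopt t (by omega) (σ t).1 (σ t).2
      unfold kappa at hk
      simpa only [show T - t - 1 + 1 = T - t from by omega, Prod.mk.eta] using hk
  -- hence also conditioned on the whole prefix
  have hfutpre : condExp μ0 p π (fun τ => ∑ j ∈ Finset.range (T - t), R τ (t + 1 + j))
      (prefixEv (T := T) σ t) = 0 := by
    rw [← hcond t ht σ hσ]
    exact hfut0
  calc
    qtil T μ0 p π Rfin t (σ t).1 (σ t).2
      = condExp μ0 p π (fun τ : Traj S A T => Rfin (tAt τ T).1 (tAt τ T).2)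
          (fun τ : Traj S A T => tAt τ t = σ t) := by
        simp only [qtil, Prod.mk.eta]
    _ = phi p π gR (T - t) (σ t) := condExp_state hp hπ gR ht (σ t) hx
    _ = condExp μ0 p π (fun τ : Traj S A T => Rfin (tAt τ T).1 (tAt τ T).2)
          (prefixEv (T := T) σ t) := (condExp_prefix hp hπ gR ht σ hσ).symm
    _ = condExp μ0 p π (fun τ : Traj S A T =>
          (∑ u ∈ Finset.range (t + 1), R τ u)
            + ∑ j ∈ Finset.range (T - t), R τ (t + 1 + j))
          (prefixEv (T := T) σ t) := by
        refine condExp_congr_on μ0 p π fun τ _ => ?_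
        rw [hR τ, hsplit τ]
    _ = condExp μ0 p π (fun τ : Traj S A T => ∑ u ∈ Finset.range (t + 1), R τ u)
          (prefixEv (T := T) σ t)
        + condExp μ0 p π (fun τ => ∑ j ∈ Finset.range (T - t), R τ (t + 1 + j))
          (prefixEv (T := T) σ t) := condExp_add μ0 p π _ _ _
    _ = condExp μ0 p π (fun τ : Traj S A T => ∑ u ∈ Finset.range (t + 1), R τ u)
          (prefixEv (T := T) σ t) := by rw [hfutpre, add_zero]
    _ = ∑ u ∈ Finset.range (t + 1), condExp μ0 p π (fun τ => R τ u)
          (prefixEv (T := T) σ t) := condExp_finsum μ0 p π _ _ _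
    _ = ∑ u ∈ Finset.range (t + 1), condExp μ0 p π (fun τ => R τ u)
          (prefixEv (T := T) σ u) := by
        refine Finset.sum_congr rfl fun u hu => ?_
        have hu' : u ≤ t := Nat.lt_succ_iff.mp (Finset.mem_range.mp hu)
        have hσu : probOf μ0 p π (prefixEv (T := T) σ u) ≠ 0 := by
          refine ne_of_gt (lt_of_lt_of_le hpos ?_)
          exact probOf_mono hμ0 hp hπ (fun τ h v hv => h v (le_trans hv hu'))
        have hconst : ∀ τ : Traj S A T, prefixEv (T := T) σ u τ → R τ u = R τ0 u := by
          intro τ h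
          refine hcausal u (le_trans hu' ht) τ τ0 fun v hv => ?_
          rw [h v hv, hτ0 v (le_trans hv hu')]
        rw [condExp_const_on (f := fun τ => R τ u) (c := R τ0 u)
            (fun τ h => hconst τ (fun v hv => h v (le_trans hv hu'))) hσ,
          condExp_const_on (f := fun τ => R τ u) (c := R τ0 u) hconst hσu]

end RR
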